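/- Let d ≥ 2 be an integer, let f and g be strictly monotone increasing real functions on [0, ∞), and let φ, ψ ∈ [0, π/2]. Suppose the unit vectors v₁, n₁, v₂, n₂ ∈ ℝ^d satisfy ⟨v₁, n₁⟩ = cos φ and ⟨v₂, n₂⟩ = cos ψ and minimize P(v₁, n₁, v₂, n₂) = −f(|v₁ − v₂|) + g(|n₁ − n₂|) over all quadruples of unit vectors satisfying these two inner-product constraints. Writing 2η = arccos⟨n₁, n₂⟩, one has φ + 2η + ψ ≤ π and arccos⟨v₁, v₂⟩ = φ + 2η + ψ; that is, the four vectors lie in a closed half-plane and occur in the angular order v₁, n₁, n₂, v₂. -/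

import Mathlib

set_option maxHeartbeats 1000000
open Real Set

section helpers

variable {E : Type*} [NormedAddCommGroup E] [InnerProductSpace ℝ E]

lemma my_inner_le_one (a b : E) (ha : ‖a‖ = 1) (hb : ‖b‖ = 1) :
    |(inner ℝ a b : ℝ)| ≤ 1 := by
  have := abs_real_inner_le_norm a b
  rwa [ha, hb, mul_one] at this

lemma my_chord_eq (a b : E) (ha : ‖a‖ = 1) (hb : ‖b‖ = 1) :
    ‖a - b‖ = Real.sqrt (2 - 2 * (inner ℝ a b : ℝ)) := by
  have h : ‖a - b‖ ^ 2 = 2 - 2 * (inner ℝ a b : ℝ) := by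
    rw [norm_sub_sq_real, ha, hb]; ring
  rw [← h, Real.sqrt_sq (norm_nonneg _)]

lemma my_le_of_cos_le_cos {s t : ℝ} (hs : s ∈ Icc 0 π) (ht : t ∈ Icc 0 π)
    (h : Real.cos t ≤ Real.cos s) : s ≤ t := by
  by_contra hlt
  push_neg at hlt
  have := Real.strictAntiOn_cos ht hs hlt
  linarith

lemma my_arccos_triangle (x y z : E) (hx : ‖x‖ = 1) (hy : ‖y‖ = 1) (hz : ‖z‖ = 1) :
    Real.arccos (inner ℝ x z : ℝ) ≤ Real.arccos (inner ℝ x y : ℝ) + Real.arccos (inner ℝ y z : ℝ) := by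
  set p : ℝ := inner ℝ x y with hp'
  set q : ℝ := inner ℝ y z with hq'
  set r : ℝ := inner ℝ x z with hr'
  have hp := my_inner_le_one x y hx hy
  have hq := my_inner_le_one y z hy hz
  have hr := my_inner_le_one x z hx hz
  have key : p * q - Real.sqrt (1 - p ^ 2) * Real.sqrt (1 - q ^ 2) ≤ r := by
    set x' := x - p • y with hx'
    set z' := z - q • y with hz'
    have hyy : (inner ℝ y y : ℝ) = 1 := by
      rw [real_inner_self_eq_norm_sq, hy]; norm_num
    have hx'n : ‖x'‖ ^ 2 = 1 - p ^ 2 := by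
      rw [hx', norm_sub_sq_real, hx, real_inner_smul_right, norm_smul, hy, ← hp']
      simp [Real.norm_eq_abs, mul_pow, sq_abs]
      ring
    have hz'n : ‖z'‖ ^ 2 = 1 - q ^ 2 := by
      rw [hz', norm_sub_sq_real, hz, real_inner_smul_right, norm_smul, hy]
      rw [real_inner_comm y z, ← hq']
      simp [Real.norm_eq_abs, mul_pow, sq_abs]
      ring
    have hinner' : (inner ℝ x' z' : ℝ) = r - p * q := by
      rw [hx', hz', inner_sub_left, inner_sub_right, inner_sub_right,
        real_inner_smul_left, real_inner_smul_right, real_inner_smul_left,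
        real_inner_smul_right, hyy]
      simp only [← hp', ← hq', ← hr']
      ring
    have hcs : -(inner ℝ x' z' : ℝ) ≤ ‖x'‖ * ‖z'‖ := by
      have := abs_real_inner_le_norm x' z'
      have h2 := neg_abs_le (inner ℝ x' z' : ℝ)
      linarith
    have hnx : ‖x'‖ = Real.sqrt (1 - p ^ 2) := by
      rw [← hx'n, Real.sqrt_sq (norm_nonneg _)]
    have hnz : ‖z'‖ = Real.sqrt (1 - q ^ 2) := by
      rw [← hz'n, Real.sqrt_sq (norm_nonneg _)]
    rw [hinner'] at hcs
    rw [hnx, hnz] at hcs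
    linarith
  have hcos : Real.cos (Real.arccos p + Real.arccos q) ≤ r := by
    rw [Real.cos_add, Real.cos_arccos (neg_le_of_abs_le hp) (le_of_abs_le hp),
      Real.cos_arccos (neg_le_of_abs_le hq) (le_of_abs_le hq),
      Real.sin_arccos, Real.sin_arccos]
    exact key
  rcases le_or_gt (Real.arccos p + Real.arccos q) π with hπ | hπ
  · refine my_le_of_cos_le_cos ⟨Real.arccos_nonneg r, Real.arccos_le_pi r⟩
      ⟨add_nonneg (Real.arccos_nonneg _) (Real.arccos_nonneg _), hπ⟩ ?_
    rwa [Real.cos_arccos (neg_le_of_abs_le hr) (le_of_abs_le hr)]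
  · exact (Real.arccos_le_pi r).trans hπ.le


end helpers

theorem stmt4 (d : ℕ) (hd : 2 ≤ d) (f g : ℝ → ℝ)
    (hf : StrictMonoOn f (Set.Ici 0)) (hg : StrictMonoOn g (Set.Ici 0))
    (φ ψ : ℝ) (hφ : φ ∈ Set.Icc 0 (Real.pi / 2)) (hψ : ψ ∈ Set.Icc 0 (Real.pi / 2))
    (v₁ n₁ v₂ n₂ : EuclideanSpace ℝ (Fin d))
    (hv₁ : ‖v₁‖ = 1) (hn₁ : ‖n₁‖ = 1) (hv₂ : ‖v₂‖ = 1) (hn₂ : ‖n₂‖ = 1)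
    (h₁ : (inner ℝ v₁ n₁ : ℝ) = Real.cos φ) (h₂ : (inner ℝ v₂ n₂ : ℝ) = Real.cos ψ)
    (hmin : ∀ w₁ m₁ w₂ m₂ : EuclideanSpace ℝ (Fin d),
      ‖w₁‖ = 1 → ‖m₁‖ = 1 → ‖w₂‖ = 1 → ‖m₂‖ = 1 →
      (inner ℝ w₁ m₁ : ℝ) = Real.cos φ → (inner ℝ w₂ m₂ : ℝ) = Real.cos ψ →
      -f ‖v₁ - v₂‖ + g ‖n₁ - n₂‖ ≤ -f ‖w₁ - w₂‖ + g ‖m₁ - m₂‖) :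
    φ + Real.arccos (inner ℝ n₁ n₂ : ℝ) + ψ ≤ Real.pi ∧
    Real.arccos (inner ℝ v₁ v₂ : ℝ) = φ + Real.arccos (inner ℝ n₁ n₂ : ℝ) + ψ := by
  obtain ⟨hφ0, hφ2⟩ := hφ
  obtain ⟨hψ0, hψ2⟩ := hψ
  have hπ := Real.pi_pos
  -- planar construction
  set i0 : Fin d := ⟨0, by omega⟩ with hi0
  set i1 : Fin d := ⟨1, by omega⟩ with hi1
  set u : ℝ → EuclideanSpace ℝ (Fin d) := fun θ =>
    Real.cos θ • EuclideanSpace.single i0 1 + Real.sin θ • EuclideanSpace.single i1 1 with hu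
  have hne : i1 ≠ i0 := by simp [hi0, hi1, Fin.ext_iff]
  have huinner : ∀ a b : ℝ, (inner ℝ (u a) (u b) : ℝ) = Real.cos (a - b) := by
    intro a b
    simp only [hu, inner_add_left, inner_add_right, real_inner_smul_left,
      real_inner_smul_right, EuclideanSpace.inner_single_left, EuclideanSpace.single_apply,
      RCLike.star_def, conj_trivial]
    rw [Real.cos_sub]
    simp only [if_neg hne, if_neg (Ne.symm hne), if_true, mul_zero, mul_one, add_zero, zero_add, one_mul]
    ring
  have hunorm : ∀ a : ℝ, ‖u a‖ = 1 := by
    intro a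
    have h1 : ‖u a‖ * ‖u a‖ = 1 := by
      rw [← real_inner_self_eq_norm_mul_norm, huinner, sub_self, Real.cos_zero]
    rcases mul_self_eq_one_iff.mp h1 with h | h
    · exact h
    · nlinarith [norm_nonneg (u a)]
  -- basic inner ℝ product facts
  have hn12 := my_inner_le_one n₁ n₂ hn₁ hn₂
  have hv12 := my_inner_le_one v₁ v₂ hv₁ hv₂
  set τ : ℝ := Real.arccos (inner ℝ n₁ n₂ : ℝ) with hτ
  set α : ℝ := Real.arccos (inner ℝ v₁ v₂ : ℝ) with hα
  have hcosτ : Real.cos τ = (inner ℝ n₁ n₂ : ℝ) :=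
    Real.cos_arccos (neg_le_of_abs_le hn12) (le_of_abs_le hn12)
  have hcosα : Real.cos α = (inner ℝ v₁ v₂ : ℝ) :=
    Real.cos_arccos (neg_le_of_abs_le hv12) (le_of_abs_le hv12)
  have hτ0 : 0 ≤ τ := Real.arccos_nonneg _
  have hτπ : τ ≤ π := Real.arccos_le_pi _
  have hα0 : 0 ≤ α := Real.arccos_nonneg _
  have hαπ : α ≤ π := Real.arccos_le_pi _
  -- Step 1 : φ + τ + ψ ≤ π via competitor (u 0, u φ, u π, u (π - ψ))
  have step1 : φ + τ + ψ ≤ π := by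
    have hc1 : (inner ℝ (u 0) (u φ) : ℝ) = Real.cos φ := by
      rw [huinner, zero_sub, Real.cos_neg]
    have hc2 : (inner ℝ (u π) (u (π - ψ)) : ℝ) = Real.cos ψ := by
      rw [huinner]; ring_nf
    have H := hmin (u 0) (u φ) (u π) (u (π - ψ)) (hunorm 0) (hunorm φ) (hunorm π)
      (hunorm (π - ψ)) hc1 hc2
    have hw : ‖u 0 - u π‖ = 2 := by
      rw [my_chord_eq _ _ (hunorm 0) (hunorm π), huinner, zero_sub, Real.cos_neg, Real.cos_pi]
      rw [show (2 : ℝ) - 2 * (-1) = 4 by ring, show (4 : ℝ) = 2 ^ 2 by ring,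
        Real.sqrt_sq (by norm_num)]
    have hvle : ‖v₁ - v₂‖ ≤ 2 := by
      calc ‖v₁ - v₂‖ ≤ ‖v₁‖ + ‖v₂‖ := norm_sub_le _ _
        _ = 2 := by rw [hv₁, hv₂]; norm_num
    have hfle : f ‖v₁ - v₂‖ ≤ f 2 :=
      hf.monotoneOn (norm_nonneg _) (by norm_num : (2:ℝ) ∈ Ici 0) hvle
    rw [hw] at H
    have hgle : g ‖n₁ - n₂‖ ≤ g ‖u φ - u (π - ψ)‖ := by linarith
    have hnle : ‖n₁ - n₂‖ ≤ ‖u φ - u (π - ψ)‖ :=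
      (hg.le_iff_le (norm_nonneg _) (norm_nonneg _)).mp hgle
    rw [my_chord_eq _ _ hn₁ hn₂, my_chord_eq _ _ (hunorm φ) (hunorm (π - ψ)), huinner] at hnle
    have hcc : Real.cos (φ - (π - ψ)) ≤ (inner ℝ n₁ n₂ : ℝ) := by
      have h4 := (Real.sqrt_le_sqrt_iff (by nlinarith [Real.cos_le_one (φ - (π - ψ))])).mp hnle
      linarith
    have hcc2 : Real.cos (π - φ - ψ) ≤ Real.cos τ := by
      rw [hcosτ]
      rw [show φ - (π - ψ) = -(π - φ - ψ) by ring, Real.cos_neg] at hcc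
      exact hcc
    have := my_le_of_cos_le_cos ⟨hτ0, hτπ⟩ ⟨by linarith, by linarith⟩ hcc2
    linarith
  refine ⟨step1, ?_⟩
  -- Step 2 : α ≥ φ + τ + ψ via competitor (u 0, u φ, u (φ+τ+ψ), u (φ+τ))
  set s : ℝ := φ + τ + ψ with hs
  have hs0 : 0 ≤ s := by positivity
  have hc1 : (inner ℝ (u 0) (u φ) : ℝ) = Real.cos φ := by
    rw [huinner, zero_sub, Real.cos_neg]
  have hc2 : (inner ℝ (u s) (u (φ + τ)) : ℝ) = Real.cos ψ := by
    rw [huinner, hs]; ring_nf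
  have H := hmin (u 0) (u φ) (u s) (u (φ + τ)) (hunorm 0) (hunorm φ) (hunorm s)
    (hunorm (φ + τ)) hc1 hc2
  have hgeq : ‖u φ - u (φ + τ)‖ = ‖n₁ - n₂‖ := by
    rw [my_chord_eq _ _ (hunorm φ) (hunorm (φ + τ)), my_chord_eq _ _ hn₁ hn₂, huinner,
      show φ - (φ + τ) = -τ by ring, Real.cos_neg, hcosτ]
  rw [hgeq] at H
  have hfle : f ‖u 0 - u s‖ ≤ f ‖v₁ - v₂‖ := by linarith
  have hwle : ‖u 0 - u s‖ ≤ ‖v₁ - v₂‖ :=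
    (hf.le_iff_le (norm_nonneg _) (norm_nonneg _)).mp hfle
  rw [my_chord_eq _ _ (hunorm 0) (hunorm s), my_chord_eq _ _ hv₁ hv₂, huinner,
    zero_sub, Real.cos_neg] at hwle
  have hcc : Real.cos s ≥ (inner ℝ v₁ v₂ : ℝ) := by
    have h4 := (Real.sqrt_le_sqrt_iff (by nlinarith [le_of_abs_le hv12])).mp hwle
    linarith
  have hge : s ≤ α := by
    refine my_le_of_cos_le_cos ⟨hs0, by linarith⟩ ⟨hα0, hαπ⟩ ?_
    rw [hcosα]; linarith
  -- triangle inequality : α ≤ s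
  have harccos1 : Real.arccos (inner ℝ v₁ n₁ : ℝ) = φ := by
    rw [h₁, Real.arccos_cos hφ0 (by linarith)]
  have harccos2 : Real.arccos (inner ℝ n₂ v₂ : ℝ) = ψ := by
    rw [real_inner_comm, h₂, Real.arccos_cos hψ0 (by linarith)]
  have ht1 := my_arccos_triangle v₁ n₁ v₂ hv₁ hn₁ hv₂
  have ht2 := my_arccos_triangle n₁ n₂ v₂ hn₁ hn₂ hv₂
  rw [harccos1] at ht1
  have harccos3 : Real.arccos (inner ℝ n₂ v₂ : ℝ) = Real.arccos (inner ℝ v₂ n₂ : ℝ) := by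
    rw [real_inner_comm]
  have hle : α ≤ s := by
    rw [harccos2] at ht2
    rw [hα, hs, hτ]
    linarith [ht1, ht2]
  linarith [le_antisymm hle hge]
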